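/- arXiv:2512.04271 — 2 statements merged into one kernel-verified Lean document; each statement's English description precedes it below -/
import Mathlib

section
/- With the vector fields v_i = ∂/∂n_i and f_j as in the standard monster chart with inverted positions IP, for all 0 ≤ i < j ≤ k the Lie derivative satisfies f_j(n_i) = b_{ij}, where b_{ij} = a_{i+1,j} if i+1 ∈ IP and b_{ij} = n_{i+1}·a_{i+1,j} otherwise, with a_{ij} = Π_{h ∈ IP, i+1 ≤ h ≤ j} n_h. -/
/-- Polynomial functions on the standard chart `U × 𝔸^k`, with variable `0`
the coordinate `r₀` and variable `i+1` the coordinate `nᵢ`. -/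
abbrev MPoly : Type := MvPolynomial ℕ ℚ

/-- A polynomial vector field, recorded by its (finitely many nonzero)
components with respect to the basis `∂/∂r₀, ∂/∂n₀, ∂/∂n₁, …`. -/
abbrev VField : Type := ℕ →₀ MPoly

/-- The coordinate function `nᵢ`. -/
noncomputable def nvar (i : ℕ) : MPoly := MvPolynomial.X (i + 1)

/-- The Lie derivative `X(q)` of a function by a vector field. -/
noncomputable def vfApply (X : VField) (q : MPoly) : MPoly :=
  X.sum fun d p => p * MvPolynomial.pderiv d q

/-- The Lie bracket `[X,Y]` of two polynomial vector fields. -/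
noncomputable def bracket (X Y : VField) : VField :=
  (X.sum fun d p => Y.sum fun c q => Finsupp.single c (p * MvPolynomial.pderiv d q)) -
  (Y.sum fun d p => X.sum fun c q => Finsupp.single c (p * MvPolynomial.pderiv d q))

/-- The standard vertical vector field `vᵢ = ∂/∂nᵢ`. -/
noncomputable def vvf (i : ℕ) : VField := Finsupp.single (i + 1) 1

/-- The standard focal vector fields: `f₀ = ∂/∂r₀`, and
`fᵢ = nᵢ·fᵢ₋₁ + vᵢ₋₁` if `i ∈ IP` (inverted choice),
`fᵢ = fᵢ₋₁ + nᵢ·vᵢ₋₁` if `i ∉ IP` (ordinary choice). -/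
noncomputable def fvf (IP : Finset ℕ) : ℕ → VField
  | 0 => Finsupp.single 0 1
  | (i + 1) =>
      if i + 1 ∈ IP then nvar (i + 1) • fvf IP i + vvf i
      else fvf IP i + nvar (i + 1) • vvf i

/-- `a_{ij} = Π_{h ∈ IP, i+1 ≤ h ≤ j} n_h`. -/
noncomputable def apoly (IP : Finset ℕ) (i j : ℕ) : MPoly :=
  ∏ h ∈ (Finset.Icc (i + 1) j).filter (fun h => h ∈ IP), nvar h

/-- `b_{ij} = a_{i+1,j}` if `i+1 ∈ IP`, and `b_{ij} = n_{i+1}·a_{i+1,j}` otherwise. -/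
noncomputable def bpoly (IP : Finset ℕ) (i j : ℕ) : MPoly :=
  if i + 1 ∈ IP then apoly IP (i + 1) j else nvar (i + 1) * apoly IP (i + 1) j

lemma vfApply_nvar (X : VField) (i : ℕ) : vfApply X (nvar i) = X (i + 1) := by
  unfold vfApply nvar
  rw [Finsupp.sum]
  have : ∀ d ∈ X.support, X d * MvPolynomial.pderiv d (MvPolynomial.X (i+1) : MPoly)
      = if d = i + 1 then X d else 0 := by
    intro d _
    rw [MvPolynomial.pderiv_X]
    by_cases h : d = i + 1
    · simp [h, Pi.single_apply]
    · simp [h, Pi.single_apply, Ne.symm h]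
  rw [Finset.sum_congr rfl this, Finset.sum_ite_eq' X.support (i+1) (fun d => X d)]
  by_cases h : i + 1 ∈ X.support
  · simp [h]
  · simp [h, Finsupp.notMem_support_iff.mp h]

lemma fvf_apply_gt (IP : Finset ℕ) (j d : ℕ) (hd : j < d) : fvf IP j d = 0 := by
  induction j generalizing d with
  | zero => simp [fvf, Finsupp.single_apply]; omega
  | succ n ih =>
    have h1 : fvf IP n d = 0 := ih d (Nat.lt_of_succ_lt hd)
    have h2 : vvf n d = 0 := by
      simp [vvf, Finsupp.single_apply]; omega
    unfold fvf
    split <;> simp [Finsupp.add_apply, Finsupp.smul_apply, h1, h2]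

lemma fvf_apply_eq (IP : Finset ℕ) (i j : ℕ) (hij : i < j) :
    fvf IP j (i + 1) = bpoly IP i j := by
  induction j with
  | zero => omega
  | succ n ih =>
    rcases Nat.lt_succ_iff_lt_or_eq.mp hij with h | h
    · -- i < n
      have hne : n + 1 ≠ i + 1 := by omega
      have hmul : bpoly IP i (n+1)
          = (if n + 1 ∈ IP then nvar (n+1) else 1) * bpoly IP i n := by
        unfold bpoly apoly
        have hins : Finset.Icc (i + 1 + 1) (n + 1) = insert (n+1) (Finset.Icc (i+1+1) n) := by
          exact (Finset.insert_Icc_right_eq_Icc_add_one (by omega)).symm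
        rw [hins]
        by_cases hn : n + 1 ∈ IP
        · rw [Finset.filter_insert, if_pos hn, Finset.prod_insert (by simp)]
          split <;> ring
        · rw [Finset.filter_insert, if_neg hn]
          split <;> ring
      have hv : vvf n (i + 1) = 0 := by simp [vvf, Finsupp.single_apply, hne, h.ne']
      rw [hmul]
      by_cases hn : n + 1 ∈ IP
      · rw [fvf, if_pos hn]
        simp [Finsupp.add_apply, Finsupp.smul_apply, hv, ih h, hn]
      · rw [fvf, if_neg hn]
        simp [hn, Finsupp.add_apply, Finsupp.smul_apply, hv, ih h, vvf, Finsupp.single_apply, hne, h.ne']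
    · -- i = n
      subst h
      have h0 : fvf IP i (i + 1) = 0 := fvf_apply_gt IP i (i+1) (by omega)
      have ha : apoly IP (i+1) (i+1) = 1 := by
        unfold apoly
        have : Finset.Icc (i + 1 + 1) (i + 1) = ∅ := by
          apply Finset.Icc_eq_empty; omega
        simp [this]
      unfold bpoly
      by_cases hn : i + 1 ∈ IP
      · rw [fvf, if_pos hn, if_pos hn]
        simp [Finsupp.add_apply, Finsupp.smul_apply, h0, vvf, Finsupp.single_apply, ha]
      · rw [fvf, if_neg hn, if_neg hn]
        simp [Finsupp.add_apply, Finsupp.smul_apply, h0, vvf, Finsupp.single_apply, ha]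




/-- the Lie derivative satisfies `f_j(n_i) = b_{ij}` for
`0 ≤ i < j ≤ k`. -/
theorem fvf_lieDeriv_nvar (k : ℕ) (IP : Finset ℕ) (hIP : IP ⊆ Finset.Icc 1 k)
    (i j : ℕ) (hij : i < j) (hjk : j ≤ k) :
    vfApply (fvf IP j) (nvar i) = bpoly IP i j := by
  rw [vfApply_nvar]
  exact fvf_apply_eq IP i j hij
end

section
/- In the standard monster chart with inverted positions IP ⊆ {1,...,k}, with vector fields v_i = ∂/∂n_i and f_j defined recursively (f_j = f_{j-1} + n_j v_{j-1} if j ∉ IP, f_j = n_j f_{j-1} + v_{j-1} if j ∈ IP, f_0 = ∂/∂r_0), the Lie bracket satisfies: [v_i, f_j] = 0 for i > j, and for 1 ≤ i ≤ j ≤ k, [v_i, f_j] = a_{ij} f_{i-1} if i ∈ IP and [v_i, f_j] = a_{ij} v_{i-1} if i ∉ IP, where a_{ij} = Π_{h ∈ IP, i+1 ≤ h ≤ j} n_h. -/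
open MvPolynomial in
lemma brk_apply (i : ℕ) (Y : VField) (c : ℕ) :
    bracket (vvf i) Y c = pderiv (i+1) (Y c) := by
  classical
  have aux : ∀ (d : ℕ) (p : MPoly),
      (Finsupp.single (i+1) (1:MPoly)).sum
        (fun c q => Finsupp.single c (p * MvPolynomial.pderiv d q)) = 0 := by
    intro d p
    rw [Finsupp.sum_single_index (by simp)]
    simp
  unfold bracket vvf
  rw [Finsupp.sub_apply, Finsupp.sum_single_index (by simp)]
  simp only [aux, Finsupp.sum_fun_zero, Finsupp.coe_zero, Pi.zero_apply, sub_zero,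
    Finsupp.sum_apply, one_mul, Finsupp.single_apply]
  rw [Finsupp.sum_ite_eq' Y c (fun c' q => (MvPolynomial.pderiv (i+1)) q)]
  split_ifs with h
  · rfl
  · rw [Finsupp.notMem_support_iff.mp h, map_zero]

open MvPolynomial

lemma brk_add (i : ℕ) (X Y : VField) :
    bracket (vvf i) (X + Y) = bracket (vvf i) X + bracket (vvf i) Y := by
  ext c; simp [brk_apply]

lemma brk_smul (i : ℕ) (a : MPoly) (Y : VField) :
    bracket (vvf i) (a • Y) = (pderiv (i+1) a) • Y + a • bracket (vvf i) Y := by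
  apply Finsupp.ext; intro c
  rw [Finsupp.add_apply, brk_apply, Finsupp.smul_apply, Finsupp.smul_apply,
    Finsupp.smul_apply, brk_apply, smul_eq_mul, smul_eq_mul, smul_eq_mul, pderiv_mul]

lemma brk_vvf (i j : ℕ) : bracket (vvf i) (vvf j) = 0 := by
  ext c
  rw [brk_apply]
  simp only [vvf, Finsupp.single_apply, Finsupp.coe_zero, Pi.zero_apply]
  split <;> simp

lemma brk_f0 (i : ℕ) (IP : Finset ℕ) : bracket (vvf i) (fvf IP 0) = 0 := by
  ext c
  rw [brk_apply]
  simp only [fvf, Finsupp.single_apply, Finsupp.coe_zero, Pi.zero_apply]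
  split <;> simp

lemma pderiv_nvar (i m : ℕ) : pderiv (i+1) (nvar m) = if m = i then 1 else 0 := by
  unfold nvar
  split_ifs with h
  · subst h; simp
  · rw [pderiv_X_of_ne (by omega)]

lemma apoly_self (IP : Finset ℕ) (i : ℕ) : apoly IP i i = 1 := by
  unfold apoly
  rw [Finset.Icc_eq_empty (by omega)]
  simp

lemma apoly_succ (IP : Finset ℕ) (i j : ℕ) (h : i ≤ j) :
    apoly IP i (j+1) = if j+1 ∈ IP then nvar (j+1) * apoly IP i j else apoly IP i j := by
  classical
  unfold apoly
  rw [show Finset.Icc (i+1) (j+1) = insert (j+1) (Finset.Icc (i+1) j) by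
    ext x; simp only [Finset.mem_Icc, Finset.mem_insert]; omega]
  rw [Finset.filter_insert]
  split_ifs with hm
  · rw [Finset.prod_insert (by simp)]
  · rfl

lemma part1 (IP : Finset ℕ) (i j : ℕ) (h : j < i) :
    bracket (vvf i) (fvf IP j) = 0 := by
  induction j with
  | zero => exact brk_f0 i IP
  | succ j ih =>
    have hj : j < i := by omega
    rw [fvf]
    split_ifs with hm
    · rw [brk_add, brk_smul, ih hj, brk_vvf, pderiv_nvar, if_neg (by omega)]
      simp
    · rw [brk_add, brk_smul, ih hj, brk_vvf, pderiv_nvar, if_neg (by omega)]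
      simp

lemma part2 (IP : Finset ℕ) (i j : ℕ) (hi : 1 ≤ i) (hij : i ≤ j) :
    bracket (vvf i) (fvf IP j) =
      if i ∈ IP then apoly IP i j • fvf IP (i - 1)
      else apoly IP i j • vvf (i - 1) := by
  induction j, hij using Nat.le_induction with
  | base =>
    obtain ⟨m, rfl⟩ : ∃ m, i = m + 1 := ⟨i - 1, by omega⟩
    rw [apoly_self]
    rw [fvf]
    split_ifs with hm
    · rw [brk_add, brk_smul, part1 IP (m+1) m (by omega), brk_vvf,
        pderiv_nvar, if_pos rfl]
      simp
    · rw [brk_add, brk_smul, part1 IP (m+1) m (by omega), brk_vvf,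
        pderiv_nvar, if_pos rfl]
      simp
  | succ j hij ih =>
    rw [fvf]
    split_ifs with hm hi'
    · -- j+1 ∈ IP, i ∈ IP
      rw [brk_add, brk_smul, ih, if_pos hi', brk_vvf, pderiv_nvar, if_neg (by omega),
        apoly_succ IP i j hij, if_pos hm, smul_smul]
      simp
    · rw [brk_add, brk_smul, ih, if_neg hi', brk_vvf, pderiv_nvar, if_neg (by omega),
        apoly_succ IP i j hij, if_pos hm, smul_smul]
      simp
    · rw [brk_add, brk_smul, ih, if_pos ‹i ∈ IP›, brk_vvf, pderiv_nvar, if_neg (by omega),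
        apoly_succ IP i j hij, if_neg hm]
      simp
    · rw [brk_add, brk_smul, ih, if_neg ‹i ∉ IP›, brk_vvf, pderiv_nvar, if_neg (by omega),
        apoly_succ IP i j hij, if_neg hm]
      simp

/-- `[vᵢ, f_j] = 0` for `i > j`, and for `1 ≤ i ≤ j ≤ k`:
`[vᵢ, f_j] = a_{ij}·fᵢ₋₁` if `i ∈ IP` and `[vᵢ, f_j] = a_{ij}·vᵢ₋₁` if `i ∉ IP`. -/
theorem bracket_vvf_fvf (k : ℕ) (IP : Finset ℕ) (hIP : IP ⊆ Finset.Icc 1 k) :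
    (∀ i j : ℕ, j < i → bracket (vvf i) (fvf IP j) = 0) ∧
    (∀ i j : ℕ, 1 ≤ i → i ≤ j → j ≤ k →
      bracket (vvf i) (fvf IP j) =
        if i ∈ IP then apoly IP i j • fvf IP (i - 1)
        else apoly IP i j • vvf (i - 1)) := by
  exact ⟨fun i j h => part1 IP i j h, fun i j hi hij _ => part2 IP i j hi hij⟩
end
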